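/- Let H = (V,E) be a hypergraph and A ⊆ E. If there exists a strong A-separator of H, then every A-separator of H is strong. -/

import Mathlib

variable {V : Type} [DecidableEq V]

/-- A join tree of a hypergraph with edge set `E`: a tree on node set `E` such that
for every vertex `v`, the edges containing `v` induce a connected subtree. -/
structure JoinTreeOf (E : Finset (Finset V)) where
  T : SimpleGraph {f // f ∈ E}
  isTree : T.IsTree
  conn : ∀ v : V, (T.induce {f : {f // f ∈ E} | v ∈ f.1}).Preconnected

/-- `x` lies on the (unique) path from `r` to `y` in `G`. -/
def onTreePath {α : Type} (G : SimpleGraph α) (r y x : α) : Prop :=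
  ∀ p : G.Walk r y, p.IsPath → x ∈ p.support

/-- A disjoint branches decomposition of the hypergraph with edge set `E`, rooted at `root`:
a join tree rooted at `root` in which any two edges on different branches
(neither an ancestor of the other) are disjoint. -/
structure DBD (E : Finset (Finset V)) (root : Finset V) where
  J : JoinTreeOf E
  rootMem : root ∈ E
  disj : ∀ a b : {f // f ∈ E}, a ≠ b →
    ¬ onTreePath J.T ⟨root, rootMem⟩ b a →
    ¬ onTreePath J.T ⟨root, rootMem⟩ a b →
    a.1 ∩ b.1 = ∅

/-- `H` is db-rootable in `e`. -/
def DbRootable (E : Finset (Finset V)) (e : Finset V) : Prop := Nonempty (DBD E e)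

/-- Two hyperedges are linked by a path of pairwise-intersecting edges of `E`. -/
def edgeLinked (E : Finset (Finset V)) (a b : Finset V) : Prop :=
  Relation.ReflTransGen (fun x y => x ∈ E ∧ y ∈ E ∧ (x ∩ y).Nonempty) a b

open Classical in
/-- The connected component (as a set of edges) of the edge `e` in the hypergraph `E`. -/
noncomputable def component (E : Finset (Finset V)) (e : Finset V) : Finset (Finset V) :=
  E.filter (edgeLinked E e)

/-- `C` is (the edge set of) a connected component of the hypergraph with edge set `E`. -/
def IsComponent (E C : Finset (Finset V)) : Prop := ∃ e ∈ E, C = component E e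

/-- The hypergraph with edge set `E` is connected. -/
def HGConnected (E : Finset (Finset V)) : Prop := ∀ a ∈ E, ∀ b ∈ E, edgeLinked E a b

/-- Vertices `u` and `w` are connected by a path of edges in `E`. -/
def vtxLinked (E : Finset (Finset V)) (u w : V) : Prop :=
  Relation.ReflTransGen (fun x y => ∃ f ∈ E, x ∈ f ∧ y ∈ f) u w

/-- The hypergraph has a join path: a join tree whose underlying tree is a path
(every node has at most two neighbours). -/
def HasJoinPath (E : Finset (Finset V)) : Prop :=
  ∃ J : JoinTreeOf E, ∀ f : {f // f ∈ E}, (J.T.neighborSet f).ncard ≤ 2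

/-- The consecutive-ones (join path) condition for a list of hyperedges. -/
def consecOnes (l : List (Finset V)) : Prop :=
  ∀ i j k : Fin l.length, i ≤ j → j ≤ k →
    ∀ v : V, v ∈ l.get i → v ∈ l.get k → v ∈ l.get j

/-- `l` is a join path (as an ordered list) of the edge set `A`. -/
def IsJoinPathList (A : Finset (Finset V)) (l : List (Finset V)) : Prop :=
  l.Nodup ∧ (∀ f, f ∈ l ↔ f ∈ A) ∧ consecOnes l

/-- `l = a₁ … a_m` is an `A`-separator of the hypergraph with edge set `E`:
a join path of `A` such that for every connected component `C` of `H \ A`,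
if `a_j ∩ V_C ≠ ∅` then `a_i ∩ V_C ⊆ a_j ∩ V_C` for all `i ≤ j`. -/
def IsSeparator (E A : Finset (Finset V)) (l : List (Finset V)) : Prop :=
  IsJoinPathList A l ∧
  ∀ C : Finset (Finset V), IsComponent (E \ A) C →
    ∀ i j : Fin l.length, i ≤ j → (l.get j ∩ C.sup id).Nonempty →
      l.get i ∩ C.sup id ⊆ l.get j ∩ C.sup id

/-- A strong `A`-separator: additionally, for every connected component `C` of
`H \ A`, the hypergraph `C ∪ {a_{l_C}}` is db-rootable in `a_{l_C}`, where
`a_{l_C}` is the last edge of the list meeting `V_C`. -/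
def IsStrongSeparator (E A : Finset (Finset V)) (l : List (Finset V)) : Prop :=
  IsSeparator E A l ∧
  ∀ C : Finset (Finset V), IsComponent (E \ A) C →
    ∀ j : Fin l.length, (l.get j ∩ C.sup id).Nonempty →
      (∀ i : Fin l.length, j < i → l.get i ∩ C.sup id = ∅) →
      DbRootable (insert (l.get j) C) (l.get j)

-- swap equiv
def insEquiv (C : Finset (Finset V)) (e e' : Finset V) (he : e ∉ C) (he' : e' ∉ C) :
    {f // f ∈ insert e C} ≃ {f // f ∈ insert e' C} where
  toFun x := if h : x.1 = e then ⟨e', Finset.mem_insert_self _ _⟩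
    else ⟨x.1, Finset.mem_insert_of_mem ((Finset.mem_insert.1 x.2).resolve_left h)⟩
  invFun y := if h : y.1 = e' then ⟨e, Finset.mem_insert_self _ _⟩
    else ⟨y.1, Finset.mem_insert_of_mem ((Finset.mem_insert.1 y.2).resolve_left h)⟩
  left_inv x := by
    by_cases h : x.1 = e
    · simp only [h, dif_pos]
      exact Subtype.ext h.symm
    · have hx : x.1 ∈ C := (Finset.mem_insert.1 x.2).resolve_left h
      have hne : x.1 ≠ e' := fun hh => he' (hh ▸ hx)
      simp [h, hne]
  right_inv y := by
    by_cases h : y.1 = e'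
    · simp only [h, dif_pos]
      exact Subtype.ext h.symm
    · have hy : y.1 ∈ C := (Finset.mem_insert.1 y.2).resolve_left h
      have hne : y.1 ≠ e := fun hh => he (hh ▸ hy)
      simp [h, hne]

lemma insEquiv_val {C : Finset (Finset V)} {e e' : Finset V} {he : e ∉ C} {he' : e' ∉ C}
    (x : {f // f ∈ insert e C}) :
    (insEquiv C e e' he he' x).1 = if x.1 = e then e' else x.1 := by
  by_cases h : x.1 = e <;> simp [insEquiv, h]

noncomputable def DBD.transfer (C : Finset (Finset V)) (e e' : Finset V) (he : e ∉ C)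
    (he' : e' ∉ C) (hV : e ∩ C.sup id = e' ∩ C.sup id) (D : DBD (insert e' C) e') :
    DBD (insert e C) e := by
  classical
  set φ := insEquiv C e e' he he' with hφ
  set T' : SimpleGraph {f // f ∈ insert e C} := D.J.T.comap φ with hT'
  have hFadj : ∀ a b, T'.Adj a b → D.J.T.Adj (φ a) (φ b) := fun a b h => h
  let F : T' →g D.J.T := ⟨φ, fun h => h⟩
  have hFinj : Function.Injective (F : {f // f ∈ insert e C} → {f // f ∈ insert e' C}) :=
    φ.injective
  have hGadj : ∀ a b, D.J.T.Adj a b → T'.Adj (φ.symm a) (φ.symm b) := by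
    intro a b h
    show D.J.T.Adj (φ (φ.symm a)) (φ (φ.symm b))
    simpa using h
  let G : D.J.T →g T' := ⟨φ.symm, fun {a b} h => hGadj a b h⟩
  have hroot : φ ⟨e, Finset.mem_insert_self _ _⟩ = ⟨e', D.rootMem⟩ := by
    apply Subtype.ext; rw [insEquiv_val]; simp
  have hrootF : F ⟨e, Finset.mem_insert_self _ _⟩ = ⟨e', D.rootMem⟩ := hroot
  -- vertex correspondence for v in the component
  have hcorr : ∀ v : V, v ∈ C.sup id → ∀ x : {f // f ∈ insert e C},
      (v ∈ x.1 ↔ v ∈ (φ x).1) := by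
    intro v hv x
    rw [insEquiv_val]
    by_cases h : x.1 = e
    · rw [if_pos h, h]
      constructor
      · intro hve
        have : v ∈ e' ∩ C.sup id := hV ▸ Finset.mem_inter.2 ⟨hve, hv⟩
        exact (Finset.mem_inter.1 this).1
      · intro hve
        have : v ∈ e ∩ C.sup id := hV.symm ▸ Finset.mem_inter.2 ⟨hve, hv⟩
        exact (Finset.mem_inter.1 this).1
    · rw [if_neg h]
  have hpre : T'.Preconnected := by
    intro x y
    have h := SimpleGraph.Reachable.map G (D.J.isTree.isConnected.preconnected (φ x) (φ y))
    have e1 : G (φ x) = x := φ.symm_apply_apply x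
    have e2 : G (φ y) = y := φ.symm_apply_apply y
    rwa [e1, e2] at h
  have hac : T'.IsAcyclic := by
    intro x p hp
    exact D.J.isTree.IsAcyclic (p.map F)
      ((SimpleGraph.Walk.map_isCycle_iff_of_injective hFinj).2 hp)
  haveI hne : Nonempty {f // f ∈ insert e C} := ⟨⟨e, Finset.mem_insert_self _ _⟩⟩
  refine ⟨⟨T', ⟨⟨hpre⟩, hac⟩, ?_⟩, Finset.mem_insert_self _ _, ?_⟩
  · -- conn
    intro v
    by_cases hv : v ∈ C.sup id
    · intro a b
      -- a b : ↥{f | v ∈ f.1} in new graph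
      have ha' : v ∈ (φ a.1).1 := (hcorr v hv a.1).1 a.2
      have hb' : v ∈ (φ b.1).1 := (hcorr v hv b.1).1 b.2
      have h := D.J.conn v ⟨φ a.1, ha'⟩ ⟨φ b.1, hb'⟩
      -- map back via hom on induced graphs
      let H : (D.J.T.induce {f | v ∈ f.1}) →g (T'.induce {f | v ∈ f.1}) :=
        ⟨fun g => ⟨φ.symm g.1, by
            have := (hcorr v hv (φ.symm g.1)).2
            simp only [Equiv.apply_symm_apply] at this
            exact this g.2⟩,
         fun {g₁ g₂} h => by
            show D.J.T.Adj (φ (φ.symm g₁.1)) (φ (φ.symm g₂.1))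
            simpa using h⟩
      have h2 := SimpleGraph.Reachable.map H h
      have e1 : H ⟨φ a.1, ha'⟩ = a := by
        apply Subtype.ext; apply Subtype.ext
        show (φ.symm (φ a.1)).1 = a.1.1
        simp
      have e2 : H ⟨φ b.1, hb'⟩ = b := by
        apply Subtype.ext; apply Subtype.ext
        show (φ.symm (φ b.1)).1 = b.1.1
        simp
      rwa [e1, e2] at h2
    · intro a b
      have key : ∀ x : {x : {f // f ∈ insert e C} // x ∈ {f | v ∈ f.1}}, x.1.1 = e := by
        intro x
        rcases Finset.mem_insert.1 x.1.2 with h | h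
        · exact h
        · exact absurd (Finset.mem_sup.2 ⟨x.1.1, h, x.2⟩) hv
      have : a = b := by
        apply Subtype.ext; apply Subtype.ext; rw [key a, key b]
      exact this ▸ SimpleGraph.Reachable.refl a
  · -- disj
    intro a b hab hpa hpb
    by_cases ha : a.1 = e
    · exact absurd (fun p _ => by
        have : a = ⟨e, Finset.mem_insert_self _ _⟩ := Subtype.ext ha
        rw [this]; exact p.start_mem_support) hpa
    by_cases hb : b.1 = e
    · exact absurd (fun p _ => by
        have : b = ⟨e, Finset.mem_insert_self _ _⟩ := Subtype.ext hb
        rw [this]; exact p.start_mem_support) hpb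
    have hφa : (φ a).1 = a.1 := by rw [insEquiv_val, if_neg ha]
    have hφb : (φ b).1 = b.1 := by rw [insEquiv_val, if_neg hb]
    have := D.disj (φ a) (φ b) (fun h => hab (φ.injective h))
      (by
        intro h
        apply hpa
        intro p hp
        have hq := h ((p.map F).copy hrootF rfl)
          (((p.map F).isPath_copy _ rfl).2
            ((SimpleGraph.Walk.map_isPath_iff_of_injective hFinj).2 hp))
        rw [SimpleGraph.Walk.support_copy, SimpleGraph.Walk.support_map] at hq
        obtain ⟨x, hx, hxe⟩ := List.mem_map.1 hq
        have : x = a := φ.injective hxe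
        rwa [← this])
      (by
        intro h
        apply hpb
        intro p hp
        have hq := h ((p.map F).copy hrootF rfl)
          (((p.map F).isPath_copy _ rfl).2
            ((SimpleGraph.Walk.map_isPath_iff_of_injective hFinj).2 hp))
        rw [SimpleGraph.Walk.support_copy, SimpleGraph.Walk.support_map] at hq
        obtain ⟨x, hx, hxe⟩ := List.mem_map.1 hq
        have : x = b := φ.injective hxe
        rwa [← this])
    rwa [hφa, hφb] at this

/-- if the hypergraph `H = (V,E)` has a strong `A`-separator, then every
`A`-separator of `H` is strong. -/
theorem stmt10 (E A : Finset (Finset V)) (hA : A ⊆ E)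
    (hex : ∃ l, IsStrongSeparator E A l) :
    ∀ l, IsSeparator E A l → IsStrongSeparator E A l := by
  classical
  obtain ⟨l₀, hl₀⟩ := hex
  intro l hl
  refine ⟨hl, ?_⟩
  intro C hC j hj hlast
  have hCsub : C ⊆ E \ A := by
    obtain ⟨e₀, _, rfl⟩ := hC
    exact Finset.filter_subset _ _
  have hmemA : l.get j ∈ A := (hl.1.2.1 _).1 (l.get_mem _)
  have hmem₀ : l.get j ∈ l₀ := (hl₀.1.1.2.1 _).2 hmemA
  obtain ⟨i₀, hi₀⟩ := List.mem_iff_get.1 hmem₀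
  set S : Finset (Fin l₀.length) :=
    Finset.univ.filter (fun i => (l₀.get i ∩ C.sup id).Nonempty) with hS
  have hSne : S.Nonempty :=
    ⟨i₀, by simp only [hS, Finset.mem_filter, Finset.mem_univ, true_and]; rw [hi₀]; exact hj⟩
  set j₀ := S.max' hSne with hj₀def
  have hj₀ : (l₀.get j₀ ∩ C.sup id).Nonempty := (Finset.mem_filter.1 (S.max'_mem hSne)).2
  have hmax : ∀ i : Fin l₀.length, (l₀.get i ∩ C.sup id).Nonempty → i ≤ j₀ :=
    fun i hi => S.le_max' i (Finset.mem_filter.2 ⟨Finset.mem_univ _, hi⟩)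
  have h1 : l.get j ∩ C.sup id ⊆ l₀.get j₀ ∩ C.sup id := by
    have := hl₀.1.2 C hC i₀ j₀ (hmax i₀ (by rw [hi₀]; exact hj)) hj₀
    rwa [hi₀] at this
  have hmem₁ : l₀.get j₀ ∈ l := (hl.1.2.1 _).2 ((hl₀.1.1.2.1 _).1 (l₀.get_mem _))
  obtain ⟨i₁, hi₁⟩ := List.mem_iff_get.1 hmem₁
  have h2 : l₀.get j₀ ∩ C.sup id ⊆ l.get j ∩ C.sup id := by
    rcases le_or_gt i₁ j with h | h
    · have := hl.2 C hC i₁ j h hj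
      rwa [hi₁] at this
    · exfalso
      have := hlast i₁ h
      rw [hi₁] at this
      exact hj₀.ne_empty this
  have heq : l.get j ∩ C.sup id = l₀.get j₀ ∩ C.sup id := Finset.Subset.antisymm h1 h2
  have hmemA₀ : l₀.get j₀ ∈ A := (hl₀.1.1.2.1 _).1 (l₀.get_mem _)
  have heC : l.get j ∉ C := fun h => (Finset.mem_sdiff.1 (hCsub h)).2 hmemA
  have he'C : l₀.get j₀ ∉ C := fun h => (Finset.mem_sdiff.1 (hCsub h)).2 hmemA₀
  have hdb := hl₀.2 C hC j₀ hj₀ (fun i hi => by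
    by_contra hne
    exact absurd (hmax i (Finset.nonempty_iff_ne_empty.2 hne)) (not_le.2 hi))
  exact hdb.elim (fun D => ⟨DBD.transfer C (l.get j) (l₀.get j₀) heC he'C heq D⟩)
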